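/- Let ℍ be a hypergraph on [n] and let A and B be acyclic orientations of ℍ. Then A ≤ B in the hypergraphic poset P_ℍ if and only if A(H) ≤ B(H) for every hyperedge H ∈ ℍ. -/

import Mathlib

/-- `ℍ` is a hypergraph on `[n]` (vertices modeled by `Fin n`):
it contains every singleton. -/
def IsHypergraph (n : ℕ) (ℍ : Finset (Finset (Fin n))) : Prop :=
  ∀ i : Fin n, ({i} : Finset (Fin n)) ∈ ℍ

/-- An orientation of `ℍ` assigns to each hyperedge `H ∈ ℍ` a source `A H ∈ H`. -/
def IsOrientation {n : ℕ} {ℍ : Finset (Finset (Fin n))}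
    (A : {H // H ∈ ℍ} → Fin n) : Prop :=
  ∀ H : {H // H ∈ ℍ}, A H ∈ H.1

/-- An orientation `A` is acyclic if there are no hyperedges `H_1, …, H_k ∈ ℍ` with
`k ≥ 2` such that `A (H_{t+1}) ∈ H_t \ {A (H_t)}` for all `t ∈ [k-1]` and
`A (H_1) ∈ H_k \ {A (H_k)}` (indexed from `0` below). -/
def IsAcyclic {n : ℕ} {ℍ : Finset (Finset (Fin n))}
    (A : {H // H ∈ ℍ} → Fin n) : Prop :=
  ¬ ∃ (k : ℕ) (Hs : ℕ → {H // H ∈ ℍ}), 2 ≤ k ∧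
      (∀ t, t + 1 < k → A (Hs (t + 1)) ∈ (Hs t).1 ∧ A (Hs (t + 1)) ≠ A (Hs t)) ∧
      A (Hs 0) ∈ (Hs (k - 1)).1 ∧ A (Hs 0) ≠ A (Hs (k - 1))

/-- The distinct orientations `A ≠ B` of `ℍ` are related by an increasing flip
between `i` and `j` (`i < j`): (a) if `A H ≠ B H` then `A H = i` and `B H = j`, and
(b) if `{i, j} ⊆ H` then `A H = i ↔ B H = j`. -/
def IsFlip {n : ℕ} {ℍ : Finset (Finset (Fin n))}
    (A B : {H // H ∈ ℍ} → Fin n) (i j : Fin n) : Prop :=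
  i < j ∧ A ≠ B ∧ ∀ H : {H // H ∈ ℍ},
    (A H ≠ B H → A H = i ∧ B H = j) ∧
    (i ∈ H.1 → j ∈ H.1 → (A H = i ↔ B H = j))

/-- `[h 0, …, h m]` is a path of length `m` in the orientation `A`:
for each `t < m` there is `H ∈ ℍ` with `A H = h t` and `h (t+1) ∈ H`. -/
def IsPath {n : ℕ} {ℍ : Finset (Finset (Fin n))}
    (A : {H // H ∈ ℍ} → Fin n) (m : ℕ) (h : ℕ → Fin n) : Prop :=
  ∀ t < m, ∃ H : {H // H ∈ ℍ}, A H = h t ∧ h (t + 1) ∈ H.1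

/-- One step in the hypergraphic poset: an increasing flip between acyclic
orientations of `ℍ`. -/
def FlipStep {n : ℕ} {ℍ : Finset (Finset (Fin n))}
    (A B : {H // H ∈ ℍ} → Fin n) : Prop :=
  IsOrientation A ∧ IsOrientation B ∧ IsAcyclic A ∧ IsAcyclic B ∧
    ∃ i j : Fin n, IsFlip A B i j

namespace SourceChar

open Relation

variable {n : ℕ} {ℍ : Finset (Finset (Fin n))}

/-- The edge relation of the digraph of an orientation. -/
def EE (A : {H // H ∈ ℍ} → Fin n) (u v : Fin n) : Prop :=
  ∃ H : {H // H ∈ ℍ}, A H = u ∧ v ∈ H.1 ∧ v ≠ u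

lemma exists_seq (A : {H // H ∈ ℍ} → Fin n) {a b : Fin n}
    (h : TransGen (EE A) a b) :
    ∃ k, 1 ≤ k ∧ ∃ Hs : ℕ → {H // H ∈ ℍ}, A (Hs 0) = a ∧
      (∀ t, t + 1 < k → A (Hs (t + 1)) ∈ (Hs t).1 ∧ A (Hs (t + 1)) ≠ A (Hs t)) ∧
      b ∈ (Hs (k - 1)).1 ∧ b ≠ A (Hs (k - 1)) := by
  induction h with
  | single e =>
    obtain ⟨H, h1, h2, h3⟩ := e
    exact ⟨1, le_refl _, fun _ => H, h1, fun t ht => absurd ht (by omega),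
      by simpa [h1], by simpa [h1] using h3⟩
  | tail _ e ih =>
    obtain ⟨k, hk, Hs, h0, hmid, hb1, hb2⟩ := ih
    obtain ⟨K, hK1, hK2, hK3⟩ := e
    refine ⟨k + 1, by omega, fun t => if t < k then Hs t else K, ?_, ?_, ?_, ?_⟩
    · simp only [if_pos (by omega : 0 < k)]; exact h0
    · intro t ht
      by_cases htk : t + 1 < k
      · simp only [if_pos htk, if_pos (by omega : t < k)]
        exact hmid t htk
      · have e1 : (if t + 1 < k then Hs (t + 1) else K) = K := if_neg (by omega)
        have e2 : (if t < k then Hs t else K) = Hs t := if_pos (by omega)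
        have ht2 : t = k - 1 := by omega
        simp only [e1, e2]
        rw [hK1, ht2]
        exact ⟨hb1, hb2⟩
    · simp only [Nat.add_sub_cancel, if_neg (lt_irrefl k)]
      exact hK2
    · simp only [Nat.add_sub_cancel, if_neg (lt_irrefl k), hK1]
      exact hK3

lemma acyclic_irrefl (A : {H // H ∈ ℍ} → Fin n) (hA : IsAcyclic A) :
    ∀ v, ¬ TransGen (EE A) v v := by
  intro v hv
  obtain ⟨k, hk, Hs, h0, hmid, hb1, hb2⟩ := exists_seq A hv
  rcases eq_or_lt_of_le hk with h1 | h2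
  · apply hb2
    have : k - 1 = 0 := by omega
    rw [this, h0]
  · exact hA ⟨k, Hs, h2, hmid, by rw [h0]; exact hb1, by rw [h0]; exact hb2⟩

lemma acyclic_of_irrefl (A : {H // H ∈ ℍ} → Fin n)
    (h : ∀ v, ¬ TransGen (EE A) v v) : IsAcyclic A := by
  rintro ⟨k, Hs, hk, hmid, hb1, hb2⟩
  apply h (A (Hs 0))
  have key : ∀ t, t < k → ReflTransGen (EE A) (A (Hs 0)) (A (Hs t)) := by
    intro t
    induction t with
    | zero => intro _; exact ReflTransGen.refl
    | succ s ih =>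
      intro hs
      exact (ih (by omega)).tail ⟨Hs s, rfl, (hmid s hs).1, (hmid s hs).2⟩
  exact TransGen.tail' (key (k - 1) (by omega)) ⟨Hs (k - 1), rfl, hb1, hb2⟩

lemma rtg_ne_transGen {α : Type*} {R : α → α → Prop} {a b : α}
    (h : ReflTransGen R a b) (hne : a ≠ b) : TransGen R a b := by
  rcases h.cases_head with rfl | ⟨c, e, h'⟩
  · exact absurd rfl hne
  · exact TransGen.head' e h'

/-- First-hit restriction: a nontrivial path to `j` can be taken with all
sources distinct from `j`. -/
lemma firsthit {α : Type*} (R : α → α → Prop) (j : α) :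
    ∀ a, TransGen R a j → a ≠ j → TransGen (fun u w => R u w ∧ u ≠ j) a j := by
  intro a h
  induction h using TransGen.head_induction_on with
  | single e => intro ha; exact TransGen.single ⟨e, ha⟩
  | head e h' ih =>
    intro ha
    rename_i a' c
    by_cases hc : c = j
    · exact TransGen.single ⟨hc ▸ e, ha⟩
    · exact (ih hc).head ⟨e, ha⟩

/-- If there is no cycle avoiding `j` and no cycle through `j`, there is no
cycle at all. -/
lemma reduce {α : Type*} (R : α → α → Prop) (j : α)
    (h1 : ∀ v, ¬ TransGen (fun u w => R u w ∧ u ≠ j ∧ w ≠ j) v v)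
    (h2 : ¬ TransGen R j j) : ∀ v, ¬ TransGen R v v := by
  have claim : ∀ a b, TransGen R a b →
      TransGen (fun u w => R u w ∧ u ≠ j ∧ w ≠ j) a b ∨
      (ReflTransGen R a j ∧ ReflTransGen R j b) := by
    intro a b h
    induction h with
    | @single b0 e =>
      by_cases haj : a = j
      · exact Or.inr ⟨haj ▸ ReflTransGen.refl, ReflTransGen.single (haj ▸ e)⟩
      · by_cases hbj : b0 = j
        · exact Or.inr ⟨ReflTransGen.single (hbj ▸ e), hbj ▸ ReflTransGen.refl⟩
        · exact Or.inl (TransGen.single ⟨e, haj, hbj⟩)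
    | @tail b' c h' e ih =>
      rcases ih with hS | ⟨p, q⟩
      · have hb'j : b' ≠ j := by
          rcases hS with hS
          have : ∀ x y, TransGen (fun u w => R u w ∧ u ≠ j ∧ w ≠ j) x y → y ≠ j := by
            intro x y hxy
            induction hxy with
            | single e' => exact e'.2.2
            | tail _ e' _ => exact e'.2.2
          exact this _ _ hS
        by_cases hcj : c = j
        · exact Or.inr ⟨(TransGen.mono (fun x y h => h.1) _ _ hS).to_reflTransGen.tail (hcj ▸ e),
            hcj ▸ ReflTransGen.refl⟩
        · exact Or.inl (hS.tail ⟨e, hb'j, hcj⟩)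
      · exact Or.inr ⟨p, q.tail e⟩
  intro v hv
  rcases claim v v hv with hS | ⟨p, q⟩
  · exact h1 v hS
  · by_cases hvj : v = j
    · exact h2 (hvj ▸ hv)
    · exact h2 (Relation.TransGen.trans_right q (rtg_ne_transGen p hvj))

variable (A B : {H // H ∈ ℍ} → Fin n)

/-- The key step: if `A < B` pointwise, both acyclic, then there is an
increasing flip from `A` staying below `B`. -/
lemma step (hAor : IsOrientation A) (hBor : IsOrientation B)
    (hAac : IsAcyclic A) (hBac : IsAcyclic B)
    (hle : ∀ H, A H ≤ B H) (hne : A ≠ B) :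
    ∃ A' : {H // H ∈ ℍ} → Fin n, FlipStep A A' ∧ (∀ H, A' H ≤ B H) ∧
      IsOrientation A' ∧ IsAcyclic A' ∧
      (∑ H : {H // H ∈ ℍ}, ((B H).val - (A' H).val)) <
        (∑ H : {H // H ∈ ℍ}, ((B H).val - (A H).val)) := by
  classical
  have hAirr := acyclic_irrefl A hAac
  have hBirr := acyclic_irrefl B hBac
  -- choose i : a reachability-maximal disagreement source of A
  have hUne : ∃ H, A H ≠ B H := by
    by_contra hc
    push_neg at hc
    exact hne (funext hc)
  obtain ⟨H₁, hH₁⟩ := hUne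
  have wfA : WellFounded (fun a b : Fin n => TransGen (EE A) b a) := by
    haveI : IsTrans (Fin n) (fun a b : Fin n => TransGen (EE A) b a) :=
      ⟨fun a b c h1 h2 => h2.trans h1⟩
    haveI : IsIrrefl (Fin n) (fun a b : Fin n => TransGen (EE A) b a) :=
      ⟨fun a => hAirr a⟩
    exact Finite.wellFounded_of_trans_of_irrefl _
  obtain ⟨i, his, hmax⟩ := wfA.has_min {v | ∃ H, A H ≠ B H ∧ A H = v}
    ⟨A H₁, H₁, hH₁, rfl⟩
  -- choose j : a B-reachability-minimal target over i
  have wfB : WellFounded (fun a b : Fin n => TransGen (EE B) a b) := by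
    haveI : IsTrans (Fin n) (fun a b : Fin n => TransGen (EE B) a b) :=
      ⟨fun a b c h1 h2 => h1.trans h2⟩
    haveI : IsIrrefl (Fin n) (fun a b : Fin n => TransGen (EE B) a b) :=
      ⟨fun a => hBirr a⟩
    exact Finite.wellFounded_of_trans_of_irrefl _
  obtain ⟨H₂, hH₂ne, hH₂A⟩ := his
  obtain ⟨j, hjt, hjmin⟩ := wfB.has_min {v | ∃ H, A H ≠ B H ∧ A H = i ∧ B H = v}
    ⟨B H₂, H₂, hH₂ne, hH₂A, rfl⟩
  obtain ⟨H₀, hH₀ne, hH₀A, hH₀B⟩ := hjt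
  have hij : i < j := by
    have h1 : A H₀ ≤ B H₀ := hle H₀
    rw [hH₀A, hH₀B] at h1
    exact lt_of_le_of_ne h1 (by rw [← hH₀A, ← hH₀B]; exact hH₀ne)
  have hij' : i ≠ j := ne_of_lt hij
  have hjH₀ : j ∈ H₀.1 := hH₀B ▸ hBor H₀
  have hiH₀ : i ∈ H₀.1 := hH₀A ▸ hAor H₀
  have eAij : EE A i j := ⟨H₀, hH₀A, hjH₀, hij'.symm⟩
  have eBji : EE B j i := ⟨H₀, hH₀B, hiH₀, hij'⟩
  -- maximality of i, restated
  have hmaxU : ∀ H, TransGen (EE A) i (A H) → B H = A H := by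
    intro H hH
    by_contra hc
    exact hmax (A H) ⟨H, fun h => hc h.symm, rfl⟩ hH
  -- no hyperedge below j : every flipped hyperedge has B-source exactly j
  have noBlow : ∀ H : {H // H ∈ ℍ}, A H = i → j ∈ H.1 → B H = j := by
    intro H hAi hjmem
    by_contra hBj
    by_cases hBi : B H = i
    · exact hBirr i ((TransGen.single ⟨H, hBi, hjmem, hij'.symm⟩).tail eBji)
    · exact hjmin (B H) ⟨H, fun h => hBi (h ▸ hAi), hAi, rfl⟩
        (TransGen.single ⟨H, rfl, hjmem, Ne.symm hBj⟩)
  -- no hyperedge containing i with A-source j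
  have noAj : ∀ H : {H // H ∈ ℍ}, i ∈ H.1 → A H ≠ j := by
    intro H hiH hAj
    exact hAirr i ((TransGen.single eAij).tail ⟨H, hAj, hiH, hij'⟩)
  -- the flipped orientation
  set A' : {H // H ∈ ℍ} → Fin n :=
    fun H => if A H = i ∧ j ∈ H.1 then j else A H with hA'def
  have hA'pos : ∀ H, A H = i → j ∈ H.1 → A' H = j := by
    intro H h1 h2; simp only [hA'def, if_pos (And.intro h1 h2)]
  have hA'neg : ∀ H, ¬(A H = i ∧ j ∈ H.1) → A' H = A H := by
    intro H h; simp only [hA'def, if_neg h]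
  have hA'or : IsOrientation A' := by
    intro H
    by_cases hF : A H = i ∧ j ∈ H.1
    · rw [hA'pos H hF.1 hF.2]; exact hF.2
    · rw [hA'neg H hF]; exact hAor H
  have hle' : ∀ H, A' H ≤ B H := by
    intro H
    by_cases hF : A H = i ∧ j ∈ H.1
    · rw [hA'pos H hF.1 hF.2, noBlow H hF.1 hF.2]
    · rw [hA'neg H hF]; exact hle H
  have hA'H₀ : A' H₀ = j := hA'pos H₀ hH₀A hjH₀
  have hAA' : A ≠ A' := by
    intro h
    apply hij'
    rw [← hH₀A, h, hA'H₀]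
  have hflip : IsFlip A A' i j := by
    refine ⟨hij, hAA', fun H => ⟨?_, ?_⟩⟩
    · intro hne'
      by_cases hF : A H = i ∧ j ∈ H.1
      · exact ⟨hF.1, hA'pos H hF.1 hF.2⟩
      · exact absurd (hA'neg H hF).symm hne'
    · intro hiH hjH
      constructor
      · intro hAi; exact hA'pos H hAi hjH
      · intro hA'j
        by_cases hF : A H = i ∧ j ∈ H.1
        · exact hF.1
        · exact absurd ((hA'neg H hF).symm.trans hA'j) (noAj H hiH)
  -- edges of A' with source ≠ j come from unflipped hyperedges
  have hsub1 : ∀ u w, EE A' u w → u ≠ j →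
      ∃ H : {H // H ∈ ℍ}, A H = u ∧ w ∈ H.1 ∧ w ≠ u ∧ ¬(A H = i ∧ j ∈ H.1) := by
    rintro u w ⟨H, hH1, hH2, hH3⟩ huj
    by_cases hF : A H = i ∧ j ∈ H.1
    · rw [hA'pos H hF.1 hF.2] at hH1; exact absurd hH1.symm huj
    · exact ⟨H, (hA'neg H hF) ▸ hH1, hH2, hH3, hF⟩
  -- transfer of restricted A'-paths to B-paths
  have transfer : ∀ u w, TransGen (fun u w => EE A' u w ∧ u ≠ j) u w →
      TransGen (EE A) i u → TransGen (EE B) u w := by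
    intro u w h
    induction h using TransGen.head_induction_on with
    | single e =>
      intro hiu
      obtain ⟨K, hK1, hK2, hK3, _⟩ := hsub1 _ _ e.1 e.2
      have hBK : B K = A K := hmaxU K (by rw [hK1]; exact hiu)
      exact TransGen.single ⟨K, by rw [hBK, hK1], hK2, hK3⟩
    | head e h' ih =>
      intro hiu
      rename_i a c
      obtain ⟨K, hK1, hK2, hK3, _⟩ := hsub1 _ _ e.1 e.2
      have hBK : B K = A K := hmaxU K (by rw [hK1]; exact hiu)
      have hic : TransGen (EE A) i c := hiu.tail ⟨K, hK1, hK2, hK3⟩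
      exact (ih hic).head ⟨K, by rw [hBK, hK1], hK2, hK3⟩
  -- no A'-cycle through j
  have noCyclej : ¬ TransGen (EE A') j j := by
    intro h
    obtain ⟨v, e, rtg⟩ := (TransGen.head'_iff).mp h
    obtain ⟨Hv, hv1, hv2, hv3⟩ := e
    have rest : TransGen (EE A') v j := rtg_ne_transGen rtg hv3
    have rest' : TransGen (fun u w => EE A' u w ∧ u ≠ j) v j :=
      firsthit (EE A') j v rest hv3
    by_cases hF : A Hv = i ∧ j ∈ Hv.1
    · -- Hv is flipped
      by_cases hvi : v = i
      · rw [hvi] at rest'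
        obtain ⟨c, e2, rtg2⟩ := (TransGen.head'_iff).mp rest'
        obtain ⟨K₀, hK1, hK2, hK3, hK4⟩ := hsub1 _ _ e2.1 e2.2
        by_cases hcj : c = j
        · exact hK4 ⟨hK1, hcj ▸ hK2⟩
        · have rest2 : TransGen (fun u w => EE A' u w ∧ u ≠ j) c j :=
            rtg_ne_transGen rtg2 hcj
          have hic : TransGen (EE A) i c := TransGen.single ⟨K₀, hK1, hK2, hK3⟩
          have hBcj : TransGen (EE B) c j := transfer _ _ rest2 hic
          by_cases hb0 : B K₀ = i
          · exact hBirr i ((hBcj.head ⟨K₀, hb0, hK2, hK3⟩).tail eBji)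
          · have hbt : B K₀ ∈ {v | ∃ H, A H ≠ B H ∧ A H = i ∧ B H = v} :=
              ⟨K₀, fun hcontra => hb0 (hcontra ▸ hK1), hK1, rfl⟩
            refine hjmin _ hbt ?_
            by_cases hcb : c = B K₀
            · exact hcb ▸ hBcj
            · exact hBcj.head ⟨K₀, rfl, hK2, fun hcontra => hcb hcontra⟩
      · have hiv : TransGen (EE A) i v := TransGen.single ⟨Hv, hF.1, hv2, hvi⟩
        have hBvj : TransGen (EE B) v j := transfer _ _ rest' hiv
        by_cases hbj : B Hv = j
        · exact hBirr j (hBvj.head ⟨Hv, hbj, hv2, hv3⟩)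
        · by_cases hbi : B Hv = i
          · exact hBirr i ((hBvj.head ⟨Hv, hbi, hv2, hvi⟩).tail eBji)
          · have hbt : B Hv ∈ {v | ∃ H, A H ≠ B H ∧ A H = i ∧ B H = v} :=
              ⟨Hv, fun hcontra => hbi (hcontra ▸ hF.1), hF.1, rfl⟩
            refine hjmin _ hbt ?_
            by_cases hvb : v = B Hv
            · exact hvb ▸ hBvj
            · exact hBvj.head ⟨Hv, rfl, hv2, fun hcontra => hvb hcontra⟩
    · -- Hv not flipped : A-cycle at j
      have hAj : A Hv = j := (hA'neg Hv hF) ▸ hv1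
      have restA : TransGen (EE A) v j := TransGen.mono (by
        intro x y hxy
        obtain ⟨K, hK1, hK2, hK3, _⟩ := hsub1 _ _ hxy.1 hxy.2
        exact ⟨K, hK1, hK2, hK3⟩) _ _ rest'
      exact hAirr j (restA.head ⟨Hv, hAj, hv2, hv3⟩)
  have hA'irr : ∀ v, ¬ TransGen (EE A') v v := by
    refine reduce (EE A') j ?_ noCyclej
    intro v hv
    apply hAirr v
    refine TransGen.mono ?_ _ _ hv
    intro x y hxy
    obtain ⟨K, hK1, hK2, hK3, _⟩ := hsub1 _ _ hxy.1 hxy.2.1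
    exact ⟨K, hK1, hK2, hK3⟩
  have hA'ac : IsAcyclic A' := acyclic_of_irrefl A' hA'irr
  refine ⟨A', ⟨hAor, hA'or, hAac, hA'ac, i, j, hflip⟩, hle', hA'or, hA'ac, ?_⟩
  refine Finset.sum_lt_sum (fun H _ => ?_) ⟨H₀, Finset.mem_univ _, ?_⟩
  · by_cases hF : A H = i ∧ j ∈ H.1
    · rw [hA'pos H hF.1 hF.2, hF.1]
      exact Nat.sub_le_sub_left (le_of_lt hij) _
    · rw [hA'neg H hF]
  · rw [hA'H₀, hH₀A, hH₀B]
    simp only [Nat.sub_self]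
    exact Nat.sub_pos_of_lt hij

end SourceChar

/-- For acyclic orientations `A`, `B` of a hypergraph `ℍ` on `[n]`:
`A ≤ B` in the hypergraphic poset `P_ℍ` iff `A H ≤ B H` for every `H ∈ ℍ`. -/
theorem source_characterization
    (n : ℕ) (hn : 1 ≤ n) (ℍ : Finset (Finset (Fin n))) (hℍ : IsHypergraph n ℍ)
    (A B : {H // H ∈ ℍ} → Fin n)
    (hAor : IsOrientation A) (hBor : IsOrientation B)
    (hAac : IsAcyclic A) (hBac : IsAcyclic B) :
    Relation.ReflTransGen (FlipStep (ℍ := ℍ)) A B ↔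
      ∀ H : {H // H ∈ ℍ}, A H ≤ B H := by
  constructor
  · intro h
    clear hAor hBor hAac hBac hn hℍ
    induction h with
    | refl => intro H; exact le_refl _
    | @tail P Q _ hstep ih =>
      intro H
      obtain ⟨_, _, _, _, i, j, hij, _, hc⟩ := hstep
      by_cases hbc : P H = Q H
      · exact le_trans (ih H) (le_of_eq hbc)
      · obtain ⟨h1, h2⟩ := (hc H).1 hbc
        exact le_trans (ih H) (h1 ▸ h2 ▸ le_of_lt hij)
  · intro hle
    have key : ∀ m (X : {H // H ∈ ℍ} → Fin n), IsOrientation X → IsAcyclic X →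
        (∀ H, X H ≤ B H) →
        (∑ H : {H // H ∈ ℍ}, ((B H).val - (X H).val)) ≤ m →
        Relation.ReflTransGen (FlipStep (ℍ := ℍ)) X B := by
      intro m
      induction m with
      | zero =>
        intro X _ _ hXle hsum
        have hXB : X = B := by
          funext H
          refine le_antisymm (hXle H) ?_
          have h0 : (B H).val - (X H).val = 0 := by
            have := Nat.le_zero.mp hsum
            exact (Finset.sum_eq_zero_iff.mp this) H (Finset.mem_univ _)
          exact Fin.le_def.mpr (by omega)
        rw [hXB]
      | succ m ih =>
        intro X hXor hXac hXle hsum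
        by_cases hXB : X = B
        · rw [hXB]
        · obtain ⟨X', hstep, hle', hX'or, hX'ac, hlt⟩ :=
            SourceChar.step X B hXor hBor hXac hBac hXle hXB
          exact Relation.ReflTransGen.head hstep
            (ih X' hX'or hX'ac hle' (by omega))
    exact key _ A hAor hAac hle (le_refl _)
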